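/- The action of ℤ generated by a minimal homeomorphism need not be biminimal: there exist points x, y in the Thue-Morse subshift Ω and open neighbourhoods 𝒰 ∋ x, 𝒱 ∋ y such that for no n ∈ ℤ do we have both σⁿ(x) ∈ 𝒱 and σ⁻ⁿ(y) ∈ 𝒰. Concretely, one may take x = ū.u and y = u.u (where u is the Thue-Morse sequence and ū its complement, concatenated at position 0), with 𝒰 = {w ∈ Ω : w(-1)=1, w(0)=0, w(1)=1} and 𝒱 = {w ∈ Ω : w(-1)=0, w(0)=0, w(1)=1}. -/

import Mathlib

open Fin.NatCast in
/-- Thue-Morse sequence: parity of number of 1s in binary expansion. -/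
def tm (n : ℕ) : Fin 2 := ((Nat.digits 2 n).count 1 : Fin 2)

/-- Thue-Morse substitution on letters. -/
def zetaWord (a : Fin 2) : List (Fin 2) := [a, 1 - a]

/-- Thue-Morse substitution on words. -/
def zetaL (w : List (Fin 2)) : List (Fin 2) := w.flatMap zetaWord

/-- Shift on bi-infinite sequences. -/
def shiftZ (w : ℤ → Fin 2) : ℤ → Fin 2 := fun n => w (n + 1)

/-- ζ on bi-infinite sequences: ζ(w)(2n)=w(n), ζ(w)(2n+1)=1-w(n). -/
def zetaZ (w : ℤ → Fin 2) : ℤ → Fin 2 :=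
  fun n => if n % 2 = 0 then w (n / 2) else 1 - w (n / 2)

/-- `v` occurs as a factor of the bi-infinite word `w`. -/
def IsFactorZ (v : List (Fin 2)) (w : ℤ → Fin 2) : Prop :=
  ∃ i : ℤ, ∀ k : ℕ, k < v.length → w (i + k) = v.getD k 0

/-- The Thue-Morse subshift: bi-infinite words all of whose factors occur in some ζⁿ(0). -/
def Omega : Set (ℤ → Fin 2) :=
  {w | ∀ v : List (Fin 2), IsFactorZ v w → ∃ n : ℕ, v <:+: zetaL^[n] [0]}

/-- x = ū.u : complement of the Thue-Morse word on negative indices, u on ℕ. -/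
noncomputable def xTM : ℤ → Fin 2 :=
  fun n => if 0 ≤ n then tm n.toNat else 1 - tm (-1 - n).toNat

/-- y = u.u. -/
noncomputable def yTM : ℤ → Fin 2 :=
  fun n => if 0 ≤ n then tm n.toNat else tm (-1 - n).toNat

def UU : Set (ℤ → Fin 2) := {w ∈ Omega | w (-1) = 1 ∧ w 0 = 0 ∧ w 1 = 1}
def VV : Set (ℤ → Fin 2) := {w ∈ Omega | w (-1) = 0 ∧ w 0 = 0 ∧ w 1 = 1}


/- ## Auxiliary lemmas -/

lemma tm_zero : tm 0 = 0 := by simp [tm]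

lemma fin2_add_one (a : Fin 2) : a + 1 = 1 - a := by revert a; decide

open Fin.NatCast in
lemma fin2_cast_succ (k : ℕ) : ((k+1 : ℕ) : Fin 2) = 1 - (k : Fin 2) := by
  rw [Nat.cast_succ]; exact fin2_add_one _

lemma fin2_sub_sub (a : Fin 2) : 1 - (1 - a) = a := by revert a; decide

lemma tm_two_mul (n : ℕ) : tm (2 * n) = tm n := by
  rcases Nat.eq_zero_or_pos n with h | h
  · simp [h]
  · unfold tm
    rw [Nat.digits_def' (by norm_num : 1 < 2) (by omega)]
    simp [Nat.mul_div_cancel_left, Nat.mul_mod_right]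

lemma tm_two_mul_add_one (n : ℕ) : tm (2 * n + 1) = 1 - tm n := by
  unfold tm
  rw [Nat.digits_def' (by norm_num : 1 < 2) (by omega)]
  have h1 : (2 * n + 1) % 2 = 1 := by omega
  have h2 : (2 * n + 1) / 2 = n := by omega
  rw [h1, h2, List.count_cons]
  simp
  exact fin2_cast_succ _

lemma tm_one : tm 1 = 1 := by simpa [tm_zero] using tm_two_mul_add_one 0

lemma zetaZ_xTM : zetaZ xTM = yTM := by
  funext n
  have hm : n % 2 = 0 ∨ n % 2 = 1 := by omega
  rcases hm with hm | hm
  · simp only [zetaZ, hm, if_pos rfl]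
    rcases le_or_gt 0 (n / 2) with h | h
    · have h0 : 0 ≤ n := by omega
      have ht : n.toNat = 2 * (n / 2).toNat := by omega
      simp only [xTM, yTM, if_pos h, if_pos h0, ht, tm_two_mul, if_true]
    · have h0 : ¬ 0 ≤ n := by omega
      have h1 : ¬ 0 ≤ n / 2 := by omega
      have ht : (-1 - n).toNat = 2 * (-1 - n / 2).toNat + 1 := by omega
      simp only [xTM, yTM, if_neg h0, if_neg h1, ht, tm_two_mul_add_one, fin2_sub_sub, if_true]
  · simp only [zetaZ, hm]
    norm_num
    rcases le_or_gt 0 (n / 2) with h | h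
    · have h0 : 0 ≤ n := by omega
      have ht : n.toNat = 2 * (n / 2).toNat + 1 := by omega
      simp only [xTM, yTM, if_pos h, if_pos h0, ht, tm_two_mul_add_one]
    · have h0 : ¬ 0 ≤ n := by omega
      have h1 : ¬ 0 ≤ n / 2 := by omega
      have ht : (-1 - n).toNat = 2 * (-1 - n / 2).toNat := by omega
      simp only [xTM, yTM, if_neg h0, if_neg h1, ht, tm_two_mul, fin2_sub_sub, if_true]

lemma zetaZ_yTM : zetaZ yTM = xTM := by
  funext n
  have hm : n % 2 = 0 ∨ n % 2 = 1 := by omega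
  rcases hm with hm | hm
  · simp only [zetaZ, hm, if_pos rfl]
    rcases le_or_gt 0 (n / 2) with h | h
    · have h0 : 0 ≤ n := by omega
      have ht : n.toNat = 2 * (n / 2).toNat := by omega
      simp only [xTM, yTM, if_pos h, if_pos h0, ht, tm_two_mul, if_true]
    · have h0 : ¬ 0 ≤ n := by omega
      have h1 : ¬ 0 ≤ n / 2 := by omega
      have ht : (-1 - n).toNat = 2 * (-1 - n / 2).toNat + 1 := by omega
      simp only [xTM, yTM, if_neg h0, if_neg h1, ht, tm_two_mul_add_one, fin2_sub_sub, if_true]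
  · simp only [zetaZ, hm]
    norm_num
    rcases le_or_gt 0 (n / 2) with h | h
    · have h0 : 0 ≤ n := by omega
      have ht : n.toNat = 2 * (n / 2).toNat + 1 := by omega
      simp only [xTM, yTM, if_pos h, if_pos h0, ht, tm_two_mul_add_one]
    · have h0 : ¬ 0 ≤ n := by omega
      have h1 : ¬ 0 ≤ n / 2 := by omega
      have ht : (-1 - n).toNat = 2 * (-1 - n / 2).toNat := by omega
      simp only [xTM, yTM, if_neg h0, if_neg h1, ht, tm_two_mul, fin2_sub_sub, if_true]

/- ## Segments of bi-infinite words -/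

def segZ (w : ℤ → Fin 2) (i : ℤ) : ℕ → List (Fin 2)
  | 0 => []
  | L + 1 => w i :: segZ w (i + 1) L

lemma length_segZ (w : ℤ → Fin 2) (i : ℤ) : ∀ L, (segZ w i L).length = L := by
  intro L
  induction L generalizing i with
  | zero => rfl
  | succ L ih => simp [segZ, ih]

lemma segZ_getD (w : ℤ → Fin 2) : ∀ (L : ℕ) (i : ℤ) (k : ℕ), k < L →
    (segZ w i L).getD k 0 = w (i + k) := by
  intro L
  induction L with
  | zero => intro i k hk; omega
  | succ L ih =>
    intro i k hk
    cases k with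
    | zero => simp [segZ]
    | succ k =>
      have := ih (i + 1) k (by omega)
      simp only [segZ, List.getD_cons_succ, this]
      congr 1
      push_cast
      ring

lemma isFactor_segZ (w : ℤ → Fin 2) (i : ℤ) (L : ℕ) : IsFactorZ (segZ w i L) w := by
  refine ⟨i, fun k hk => ?_⟩
  rw [length_segZ] at hk
  exact (segZ_getD w L i k hk).symm

lemma eq_segZ {v : List (Fin 2)} {w : ℤ → Fin 2} (h : IsFactorZ v w) :
    ∃ i, v = segZ w i v.length := by
  obtain ⟨i, h⟩ := h
  refine ⟨i, ?_⟩
  apply List.ext_getElem (by rw [length_segZ])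
  intro k h1 h2
  have hk : k < v.length := h1
  have := h k hk
  rw [List.getD_eq_getElem v 0 hk] at this
  rw [← this, ← segZ_getD w v.length i k hk,
    List.getD_eq_getElem _ 0 (by rw [length_segZ]; exact hk)]

lemma segZ_append (w : ℤ → Fin 2) : ∀ (m : ℕ) (i : ℤ) (n : ℕ),
    segZ w i m ++ segZ w (i + m) n = segZ w i (m + n) := by
  intro m
  induction m with
  | zero => intro i n; simp [segZ]
  | succ m ih =>
    intro i n
    have e : i + ((m : ℤ) + 1) = (i + 1) + m := by ring
    simp only [segZ, List.cons_append]
    push_cast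
    rw [e, ih (i + 1) n]
    have hmn : m + 1 + n = (m + n) + 1 := by omega
    rw [hmn]
    simp [segZ]

lemma segZ_infix (w : ℤ → Fin 2) {i i' : ℤ} {L L' : ℕ}
    (h1 : i' ≤ i) (h2 : i + L ≤ i' + L') :
    segZ w i L <:+: segZ w i' L' := by
  set a := (i - i').toNat with ha
  set b := (i' + L' - (i + L)).toNat with hb
  have haa : i' + (a : ℤ) = i := by omega
  have hbb : L' = a + (L + b) := by omega
  refine ⟨segZ w i' a, segZ w (i + L) b, ?_⟩
  rw [List.append_assoc, segZ_append]
  have := segZ_append w a i' (L + b)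
  rw [haa] at this
  rw [this, hbb]

lemma zetaL_segZ (w : ℤ → Fin 2) : ∀ (m : ℕ) (i : ℤ),
    zetaL (segZ w i m) = segZ (zetaZ w) (2 * i) (2 * m) := by
  intro m
  induction m with
  | zero => intro i; rfl
  | succ m ih =>
    intro i
    have h1 : zetaZ w (2 * i) = w i := by
      simp only [zetaZ]
      rw [if_pos (by omega)]
      congr 1
      omega
    have h2 : zetaZ w (2 * i + 1) = 1 - w i := by
      simp only [zetaZ]
      rw [if_neg (by omega)]
      congr 2
      omega
    have e : 2 * (m + 1) = (2 * m) + 1 + 1 := by ring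
    rw [e]
    show zetaWord (w i) ++ zetaL (segZ w (i+1) m) = _
    simp only [segZ, zetaWord]
    rw [ih (i + 1), ← h2, ← h1]
    simp only [List.cons_append, List.nil_append]
    have e2 : 2 * (i + 1) = 2 * i + 1 + 1 := by ring
    rw [e2]

lemma zetaL_infix {v v' : List (Fin 2)} (h : v <:+: v') : zetaL v <:+: zetaL v' := by
  obtain ⟨s, t, rfl⟩ := h
  exact ⟨zetaL s, zetaL t, by simp [zetaL, List.flatMap_append]⟩

lemma factor_lift {w : ℤ → Fin 2} {v : List (Fin 2)} (h : IsFactorZ v (zetaZ w)) :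
    ∃ v', IsFactorZ v' w ∧ v <:+: zetaL v' ∧ v'.length = v.length / 2 + 1 := by
  obtain ⟨i, hv⟩ := eq_segZ h
  set L := v.length with hL
  refine ⟨segZ w (i / 2) (L / 2 + 1), isFactor_segZ w _ _, ?_, by rw [length_segZ]⟩
  rw [hv, zetaL_segZ]
  exact segZ_infix _ (by omega) (by omega)

lemma small_infix (v : List (Fin 2)) (h : v.length ≤ 2) : v <:+: zetaL^[3] [0] := by
  match v with
  | [] => exact List.nil_infix
  | [a] => fin_cases a <;> decide
  | [a, b] => fin_cases a <;> fin_cases b <;> decide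
  | a :: b :: c :: t => simp at h

lemma key_factor : ∀ (L : ℕ) (v : List (Fin 2)), v.length = L →
    IsFactorZ v xTM ∨ IsFactorZ v yTM → ∃ n, v <:+: zetaL^[n] [0] := by
  intro L
  induction L using Nat.strong_induction_on with
  | _ L ih =>
    intro v hlen hv
    by_cases hL : L ≤ 2
    · exact ⟨3, small_infix v (by omega)⟩
    · rcases hv with hv | hv
      · rw [← zetaZ_yTM] at hv
        obtain ⟨v', hf, hinf, hl⟩ := factor_lift hv
        obtain ⟨n, hn⟩ := ih v'.length (by omega) v' rfl (Or.inr hf)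
        refine ⟨n + 1, hinf.trans ?_⟩
        rw [Function.iterate_succ_apply']
        exact zetaL_infix hn
      · rw [← zetaZ_xTM] at hv
        obtain ⟨v', hf, hinf, hl⟩ := factor_lift hv
        obtain ⟨n, hn⟩ := ih v'.length (by omega) v' rfl (Or.inl hf)
        refine ⟨n + 1, hinf.trans ?_⟩
        rw [Function.iterate_succ_apply']
        exact zetaL_infix hn

lemma xTM_mem_Omega : xTM ∈ Omega := fun v hv => key_factor v.length v rfl (Or.inl hv)

lemma yTM_mem_Omega : yTM ∈ Omega := fun v hv => key_factor v.length v rfl (Or.inr hv)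

lemma xTM_neg_one : xTM (-1) = 1 := by
  have : xTM (-1) = 1 - tm ((0:ℤ).toNat) := by
    simp only [xTM]
    rw [if_neg (by omega)]
    congr 2
  simpa [tm_zero] using this

lemma xTM_zero : xTM 0 = 0 := by simp [xTM, tm_zero]

lemma xTM_one : xTM 1 = 1 := by
  simp only [xTM, if_pos (by omega : (0:ℤ) ≤ 1)]
  exact tm_one

lemma yTM_neg_one : yTM (-1) = 0 := by
  have : yTM (-1) = tm ((0:ℤ).toNat) := by
    simp only [yTM]
    rw [if_neg (by omega)]
    congr 1
  simpa [tm_zero] using this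

lemma yTM_zero : yTM 0 = 0 := by simp [yTM, tm_zero]

lemma yTM_one : yTM 1 = 1 := by
  simp only [yTM, if_pos (by omega : (0:ℤ) ≤ 1)]
  exact tm_one

/-- The Thue-Morse system is not biminimal. -/
theorem thue_morse_not_biminimal :
    xTM ∈ Omega ∧ yTM ∈ Omega ∧ xTM ∈ UU ∧ yTM ∈ VV ∧
    IsOpen {w : ℤ → Fin 2 | w (-1) = 1 ∧ w 0 = 0 ∧ w 1 = 1} ∧
    IsOpen {w : ℤ → Fin 2 | w (-1) = 0 ∧ w 0 = 0 ∧ w 1 = 1} ∧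
    ∀ n : ℤ, ¬ ((fun k => xTM (k + n)) ∈ VV ∧ (fun k => yTM (k - n)) ∈ UU) := by
  refine ⟨xTM_mem_Omega, yTM_mem_Omega,
    ⟨xTM_mem_Omega, xTM_neg_one, xTM_zero, xTM_one⟩,
    ⟨yTM_mem_Omega, yTM_neg_one, yTM_zero, yTM_one⟩, ?_, ?_, ?_⟩
  · have h : {w : ℤ → Fin 2 | w (-1) = 1 ∧ w 0 = 0 ∧ w 1 = 1} =
        ((fun w : ℤ → Fin 2 => w (-1)) ⁻¹' {1}) ∩
          (((fun w : ℤ → Fin 2 => w 0) ⁻¹' {0}) ∩ ((fun w : ℤ → Fin 2 => w 1) ⁻¹' {1})) := rfl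
    rw [h]
    exact ((isOpen_discrete _).preimage (continuous_apply _)).inter
      (((isOpen_discrete _).preimage (continuous_apply _)).inter
        ((isOpen_discrete _).preimage (continuous_apply _)))
  · have h : {w : ℤ → Fin 2 | w (-1) = 0 ∧ w 0 = 0 ∧ w 1 = 1} =
        ((fun w : ℤ → Fin 2 => w (-1)) ⁻¹' {0}) ∩
          (((fun w : ℤ → Fin 2 => w 0) ⁻¹' {0}) ∩ ((fun w : ℤ → Fin 2 => w 1) ⁻¹' {1})) := rfl
    rw [h]
    exact ((isOpen_discrete _).preimage (continuous_apply _)).inter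
      (((isOpen_discrete _).preimage (continuous_apply _)).inter
        ((isOpen_discrete _).preimage (continuous_apply _)))
  · intro n hcontra
    obtain ⟨hx, hy⟩ := hcontra
    obtain ⟨-, hx1, hx2, -⟩ := hx
    obtain ⟨-, hy1, hy2, -⟩ := hy
    have hx1' : xTM (-1 + n) = 0 := hx1
    have hx2' : xTM (0 + n) = 0 := hx2
    have hy1' : yTM (-1 - n) = 1 := hy1
    have hy2' : yTM (0 - n) = 0 := hy2
    rcases lt_trichotomy n 0 with hn | hn | hn
    · have hxv : xTM (-1 + n) = 1 - tm (-n).toNat := by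
        simp only [xTM]
        rw [if_neg (by omega)]
        congr 2
        omega
      have hyv : yTM (0 - n) = tm (-n).toNat := by
        simp only [yTM]
        rw [if_pos (by omega)]
        congr 1
        omega
      rw [hxv] at hx1'
      rw [hyv] at hy2'
      rw [hy2'] at hx1'
      exact absurd hx1' (by decide)
    · subst hn
      have h1 : xTM (-1 + 0) = 1 := by norm_num [xTM_neg_one]
      rw [hx1'] at h1
      exact absurd h1 (by decide)
    · have hxv : xTM (0 + n) = tm n.toNat := by
        simp only [xTM]
        rw [if_pos (by omega)]
        congr 1
        omega
      have hyv : yTM (-1 - n) = tm n.toNat := by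
        simp only [yTM]
        rw [if_neg (by omega)]
        congr 1
        omega
      rw [hxv] at hx2'
      rw [hyv] at hy1'
      rw [hx2'] at hy1'
      exact absurd hy1' (by decide)
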